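/- Let (X,r) be a finite quantum binomial set and let O ⊆ X³ be a D-orbit. Write E(O) = O ∩ (((Δ₂ × X) ∪ (X × Δ₂)) \ Δ₃). Then: (i) if O ∩ Δ₃ ≠ ∅ then |O| = 1 (the D-orbit of (x,x,x) is the singleton {(x,x,x)}); (ii) if E(O) ≠ ∅ then |O| ≥ 3 and |E(O)| = 2; (iii) if O ∩ ((Δ₂ × X) ∪ (X × Δ₂)) = ∅ then |O| ≥ 6. -/

import Mathlib

/-- The map r¹² = r × id acting on X³ (realized as `X × X × X`). -/
def r12 {X : Type*} (r : X × X → X × X) : X × X × X → X × X × X :=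
  fun p => ((r (p.1, p.2.1)).1, (r (p.1, p.2.1)).2, p.2.2)

/-- The map r²³ = id × r acting on X³. -/
def r23 {X : Type*} (r : X × X → X × X) : X × X × X → X × X × X :=
  fun p => (p.1, (r (p.2.1, p.2.2)).1, (r (p.2.1, p.2.2)).2)

/-- One step of the action of the group D(r) generated by r¹² and r²³. -/
def dStep {X : Type*} (r : X × X → X × X) (a b : X × X × X) : Prop :=
  r12 r a = b ∨ r23 r a = b

/-- `O` is an orbit of the group D(r) = ⟨r¹², r²³⟩ acting on X³. -/
def IsDOrbit {X : Type*} (r : X × X → X × X) (O : Set (X × X × X)) : Prop :=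
  ∃ a, O = {b | Relation.EqvGen (dStep r) a b}

/-- `(X,r)` is a quantum binomial set: `r` is involutive, nondegenerate
(left and right actions are bijective) and square-free. -/
def IsQuantumBinomial {X : Type*} (r : X × X → X × X) : Prop :=
  Function.Involutive r ∧
  (∀ x : X, Function.Bijective (fun y => (r (x, y)).1)) ∧
  (∀ x : X, Function.Bijective (fun y => (r (y, x)).2)) ∧
  (∀ x : X, r (x, x) = (x, x))

/-- The subset Δ₂ × X of X³. -/
def Diag2X {X : Type*} : Set (X × X × X) := {p | p.1 = p.2.1}

/-- The subset X × Δ₂ of X³. -/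
def XDiag2 {X : Type*} : Set (X × X × X) := {p | p.2.1 = p.2.2}

/-- The diagonal Δ₃ of X³. -/
def Diag3 {X : Type*} : Set (X × X × X) := {p | p.1 = p.2.1 ∧ p.2.1 = p.2.2}

/-- `(X,r)` is braided: the braid relation r¹²r²³r¹² = r²³r¹²r²³ holds on X³. -/
def IsBraided {X : Type*} (r : X × X → X × X) : Prop :=
  (r12 r) ∘ (r23 r) ∘ (r12 r) = (r23 r) ∘ (r12 r) ∘ (r23 r)


open Relation

namespace DOrbitAux

variable {α : Type*}

theorem eqvGen_iff_of_invariant {d : α → α → Prop} {P : α → Prop}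
    (h : ∀ x y, d x y → (P x ↔ P y)) {x y : α} (hxy : EqvGen d x y) : P x ↔ P y := by
  induction hxy with
  | rel a b hab => exact h a b hab
  | refl a => exact Iff.rfl
  | symm a b _ ih => exact ih.symm
  | trans a b c _ _ ih₁ ih₂ => exact ih₁.trans ih₂

def gen (A B : α → α) (n : ℕ) : α → α := if n % 2 = 0 then B else A

def seq (A B : α → α) (p : α) : ℕ → α
  | 0 => p
  | n + 1 => gen A B n (seq A B p n)

theorem gen_congr {A B : α → α} {m n : ℕ} (h : m % 2 = n % 2) : gen A B m = gen A B n := by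
  unfold gen; rw [h]

theorem gen_invol {A B : α → α} (hA : Function.Involutive A) (hB : Function.Involutive B)
    (n : ℕ) : Function.Involutive (gen A B n) := by
  unfold gen; split <;> assumption

theorem seq_back {A B : α → α} (hA : Function.Involutive A) (hB : Function.Involutive B)
    {p : α} (n : ℕ) : gen A B n (seq A B p (n + 1)) = seq A B p n :=
  gen_invol hA hB n (seq A B p n)

theorem seq_inj {A B : α → α} (hA : Function.Involutive A) (hB : Function.Involutive B)
    {p : α} (hp : A p = p) {M : ℕ}
    (hM : ∀ k, k < M → seq A B p (k + 1) ≠ seq A B p k) :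
    ∀ j, j ≤ M → ∀ i, i < j → seq A B p i ≠ seq A B p j := by
  intro j
  induction j using Nat.strong_induction_on with
  | _ j IH =>
  intro hjM i hij heq
  obtain ⟨j', rfl⟩ : ∃ j', j = j' + 1 := ⟨j - 1, by omega⟩
  by_cases hpar : i % 2 = (j' + 1) % 2
  · rcases Nat.eq_zero_or_pos i with rfl | hi
    · -- i = 0 : stall at j'
      have hj' : j' % 2 = 1 := by omega
      have h1 : seq A B p j' = A (seq A B p (j' + 1)) := by
        rw [← seq_back hA hB j']
        unfold gen
        rw [hj']
        simp
      have h2 : A (seq A B p (j' + 1)) = p := by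
        rw [← heq]
        show A (seq A B p 0) = p
        exact hp
      exact hM j' (by omega) (by rw [← heq, h1, h2]; rfl)
    · obtain ⟨i', rfl⟩ : ∃ i', i = i' + 1 := ⟨i - 1, by omega⟩
      have h1 : seq A B p i' = seq A B p j' := by
        rw [← seq_back hA hB i', ← seq_back hA hB j', heq, gen_congr (show i' % 2 = j' % 2 by omega)]
      exact IH j' (by omega) (by omega) i' (by omega) h1
  · rcases Nat.eq_or_lt_of_le (show i + 1 ≤ j' + 1 by omega) with hji | hji
    · exact hM i (by omega) (by rw [show i + 1 = j' + 1 by omega]; exact heq.symm)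
    · have h1 : seq A B p (i + 1) = seq A B p j' := by
        show gen A B i (seq A B p i) = _
        rw [heq, gen_congr (show i % 2 = j' % 2 by omega), seq_back hA hB j']
      exact IH j' (by omega) (by omega) (i + 1) (by omega) h1

theorem seq_stall [Finite α] {A B : α → α} (hA : Function.Involutive A)
    (hB : Function.Involutive B) {p : α} (hp : A p = p) :
    ∃ n, seq A B p (n + 1) = seq A B p n := by
  by_contra h
  push_neg at h
  have hinj : Function.Injective (seq A B p) := by
    intro i j hij
    by_contra hne
    rcases Nat.lt_or_ge i j with hlt | hge
    · exact seq_inj hA hB hp (fun k _ => h k) j le_rfl i hlt hij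
    · exact seq_inj hA hB hp (fun k _ => h k) i le_rfl j (by omega) hij.symm
  obtain ⟨i, j, hne, hij⟩ := Finite.exists_ne_map_eq_of_infinite (seq A B p)
  exact hne (hinj hij)

theorem seq_reflect {A B : α → α} (hA : Function.Involutive A) (hB : Function.Involutive B)
    {p : α} {N : ℕ} (hstall : seq A B p (N + 1) = seq A B p N) :
    ∀ k, k ≤ N → seq A B p (N + 1 + k) = seq A B p (N - k) := by
  intro k
  induction k with
  | zero => intro _; simpa using hstall
  | succ k ih =>
    intro hk
    have ihk := ih (by omega)
    have h1 : seq A B p (N + 1 + (k + 1)) = gen A B (N + 1 + k) (seq A B p (N + 1 + k)) := rfl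
    rw [h1, ihk, gen_congr (show (N + 1 + k) % 2 = (N - (k + 1)) % 2 by omega)]
    rw [show N - k = (N - (k + 1)) + 1 by omega, seq_back hA hB]

theorem seq_period {A B : α → α} (hA : Function.Involutive A) (hB : Function.Involutive B)
    {p : α} (hp : A p = p) {N : ℕ} (hstall : seq A B p (N + 1) = seq A B p N) :
    ∀ k, seq A B p (2 * N + 2 + k) = seq A B p k := by
  have h0 : seq A B p (2 * N + 1) = p := by
    have := seq_reflect hA hB hstall N le_rfl
    rw [show N + 1 + N = 2 * N + 1 by omega] at this
    simpa [seq] using this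
  have h1 : seq A B p (2 * N + 2) = p := by
    have he : seq A B p (2 * N + 2) = gen A B (2 * N + 1) (seq A B p (2 * N + 1)) := rfl
    rw [he, h0]
    unfold gen
    rw [show (2 * N + 1) % 2 = 1 by omega]
    simpa using hp
  intro k
  induction k with
  | zero => simpa [seq] using h1
  | succ k ih =>
    have he : seq A B p (2 * N + 2 + (k + 1)) = gen A B (2 * N + 2 + k) (seq A B p (2 * N + 2 + k)) := rfl
    rw [he, ih, gen_congr (show (2 * N + 2 + k) % 2 = k % 2 by omega)]
    rfl

theorem seq_range {A B : α → α} (hA : Function.Involutive A) (hB : Function.Involutive B)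
    {p : α} (hp : A p = p) {N : ℕ} (hstall : seq A B p (N + 1) = seq A B p N) :
    ∀ n, ∃ m, m ≤ N ∧ seq A B p m = seq A B p n := by
  intro n
  induction n using Nat.strong_induction_on with
  | _ n IH =>
  rcases le_or_gt n N with h | h
  · exact ⟨n, h, rfl⟩
  rcases Nat.lt_or_ge n (2 * N + 2) with h2 | h2
  · refine ⟨N - (n - (N + 1)), by omega, ?_⟩
    have := seq_reflect hA hB hstall (n - (N + 1)) (by omega)
    rw [show N + 1 + (n - (N + 1)) = n by omega] at this
    exact this.symm
  · obtain ⟨m, hm, he⟩ := IH (n - (2 * N + 2)) (by omega)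
    refine ⟨m, hm, ?_⟩
    rw [he]
    have := seq_period hA hB hp hstall (n - (2 * N + 2))
    rw [show 2 * N + 2 + (n - (2 * N + 2)) = n by omega] at this
    exact this.symm

theorem seq_mem_class {A B : α → α} {p : α} :
    ∀ n, EqvGen (fun u v => A u = v ∨ B u = v) p (seq A B p n) := by
  intro n
  induction n with
  | zero => exact EqvGen.refl p
  | succ n ih =>
    refine EqvGen.trans _ _ _ ih (EqvGen.rel _ _ ?_)
    show A (seq A B p n) = seq A B p (n + 1) ∨ B (seq A B p n) = seq A B p (n + 1)
    have he : seq A B p (n + 1) = gen A B n (seq A B p n) := rfl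
    unfold gen at he
    rcases Nat.mod_two_eq_zero_or_one n with h | h <;> rw [h] at he <;> simp at he
    · exact Or.inr he.symm
    · exact Or.inl he.symm

theorem seq_closed {A B : α → α} (hA : Function.Involutive A) (hB : Function.Involutive B)
    {p : α} (hp : A p = p) (n : ℕ) :
    (∃ m, seq A B p m = A (seq A B p n)) ∧ (∃ m, seq A B p m = B (seq A B p n)) := by
  have hg1 : ∃ m, seq A B p m = gen A B n (seq A B p n) := ⟨n + 1, rfl⟩
  have hg2 : ∃ m, seq A B p m = gen A B (n + 1) (seq A B p n) := by
    rcases Nat.eq_zero_or_pos n with rfl | hn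
    · refine ⟨0, ?_⟩
      unfold gen
      norm_num
      exact hp.symm
    · obtain ⟨n', rfl⟩ : ∃ n', n = n' + 1 := ⟨n - 1, by omega⟩
      exact ⟨n', by rw [gen_congr (show (n' + 1 + 1) % 2 = n' % 2 by omega), seq_back hA hB]⟩
  rcases Nat.mod_two_eq_zero_or_one n with h | h
  · constructor
    · obtain ⟨m, hm⟩ := hg2
      exact ⟨m, by rw [hm]; unfold gen; rw [show (n+1) % 2 = 1 by omega]; simp⟩
    · obtain ⟨m, hm⟩ := hg1
      exact ⟨m, by rw [hm]; unfold gen; rw [h]; simp⟩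
  · constructor
    · obtain ⟨m, hm⟩ := hg1
      exact ⟨m, by rw [hm]; unfold gen; rw [h]; simp⟩
    · obtain ⟨m, hm⟩ := hg2
      exact ⟨m, by rw [hm]; unfold gen; rw [show (n+1) % 2 = 0 by omega]; simp⟩

theorem path_main [Finite α] {A B : α → α} (hA : Function.Involutive A)
    (hB : Function.Involutive B) {p : α} (hp : A p = p) (h1 : B p ≠ p)
    (h2 : A (B p) ≠ B p) :
    3 ≤ {b | EqvGen (fun u v => A u = v ∨ B u = v) p b}.ncard ∧
    ∃ q, q ≠ p ∧
      {b | EqvGen (fun u v => A u = v ∨ B u = v) p b ∧ (A b = b ∨ B b = b)} = {p, q} := by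
  classical
  have hex : ∃ n, seq A B p (n + 1) = seq A B p n := seq_stall hA hB hp
  set N := Nat.find hex with hNdef
  have hstall : seq A B p (N + 1) = seq A B p N := Nat.find_spec hex
  have hmin : ∀ k, k < N → seq A B p (k + 1) ≠ seq A B p k := fun k hk => Nat.find_min hex hk
  have inj := seq_inj hA hB hp hmin
  have hs1 : seq A B p 1 = B p := by
    show gen A B 0 p = B p
    unfold gen; simp
  have hs2 : seq A B p 2 = A (B p) := by
    show gen A B 1 (seq A B p 1) = A (B p)
    rw [hs1]; unfold gen; simp
  have hN2 : 2 ≤ N := by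
    rcases Nat.lt_or_ge N 2 with h | h
    · interval_cases N
      · exact absurd (by rw [hs1] at hstall; exact hstall) h1
      · exact absurd (by rw [hs1, hs2] at hstall; exact hstall) h2
    · exact h
  have hC : {b | EqvGen (fun u v => A u = v ∨ B u = v) p b} = Set.range (seq A B p) := by
    apply subset_antisymm
    · intro b hb
      have hinvp : ∀ x y, (fun u v => A u = v ∨ B u = v) x y →
          (x ∈ Set.range (seq A B p) ↔ y ∈ Set.range (seq A B p)) := by
        rintro x y (rfl | rfl)
        · constructor
          · rintro ⟨n, rfl⟩
            obtain ⟨⟨m, hm⟩, -⟩ := seq_closed hA hB hp n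
            exact ⟨m, hm⟩
          · rintro ⟨n, hn⟩
            obtain ⟨⟨m, hm⟩, -⟩ := seq_closed hA hB hp n
            exact ⟨m, by rw [hm, hn, hA]⟩
        · constructor
          · rintro ⟨n, rfl⟩
            obtain ⟨-, ⟨m, hm⟩⟩ := seq_closed hA hB hp n
            exact ⟨m, hm⟩
          · rintro ⟨n, hn⟩
            obtain ⟨-, ⟨m, hm⟩⟩ := seq_closed hA hB hp n
            exact ⟨m, by rw [hm, hn, hB]⟩
      exact (eqvGen_iff_of_invariant hinvp hb).mp ⟨0, rfl⟩
    · rintro b ⟨n, rfl⟩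
      exact seq_mem_class n
  constructor
  · have hsub : ({seq A B p 0, seq A B p 1, seq A B p 2} : Set α) ⊆
        {b | EqvGen (fun u v => A u = v ∨ B u = v) p b} := by
      intro x hx
      simp only [Set.mem_insert_iff, Set.mem_singleton_iff] at hx
      have : ∃ n, x = seq A B p n := by
        rcases hx with h | h | h
        exacts [⟨0, h⟩, ⟨1, h⟩, ⟨2, h⟩]
      obtain ⟨n, rfl⟩ := this
      exact seq_mem_class n
    have d01 := inj 1 (by omega) 0 (by omega)
    have d02 := inj 2 (by omega) 0 (by omega)
    have d12 := inj 2 (by omega) 1 (by omega)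
    have hcard : ({seq A B p 0, seq A B p 1, seq A B p 2} : Set α).ncard = 3 := by
      rw [Set.ncard_insert_of_notMem (by
        simp only [Set.mem_insert_iff, Set.mem_singleton_iff]
        push_neg
        exact ⟨d01, d02⟩)]
      rw [Set.ncard_insert_of_notMem (by
        simp only [Set.mem_singleton_iff]
        exact d12)]
      rw [Set.ncard_singleton]
    calc 3 = ({seq A B p 0, seq A B p 1, seq A B p 2} : Set α).ncard := hcard.symm
    _ ≤ _ := Set.ncard_le_ncard hsub (Set.toFinite _)
  · refine ⟨seq A B p N, (inj N le_rfl 0 (by omega)).symm, ?_⟩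
    ext b
    simp only [Set.mem_setOf_eq, Set.mem_insert_iff, Set.mem_singleton_iff]
    constructor
    · rintro ⟨hb, hfix⟩
      have hb' : b ∈ Set.range (seq A B p) := by rw [← hC]; exact hb
      obtain ⟨n, rfl⟩ := hb'
      clear hb
      obtain ⟨m, hmN, hme⟩ := seq_range hA hB hp hstall n
      rw [← hme] at hfix ⊢
      rcases Nat.eq_zero_or_pos m with rfl | hm0
      · exact Or.inl rfl
      rcases Nat.eq_or_lt_of_le hmN with rfl | hmN'
      · exact Or.inr rfl
      exfalso
      -- 0 < m < N and seq m is fixed by A or B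
      have hkey : gen A B m (seq A B p m) = seq A B p m ∨
          gen A B (m + 1) (seq A B p m) = seq A B p m := by
        rcases Nat.mod_two_eq_zero_or_one m with h | h
        · rcases hfix with h' | h'
          · right
            rw [show gen A B (m+1) = A by unfold gen; rw [show (m+1) % 2 = 1 by omega]; simp]
            exact h'
          · left
            rw [show gen A B m = B by unfold gen; rw [h]; simp]
            exact h'
        · rcases hfix with h' | h'
          · left
            rw [show gen A B m = A by unfold gen; rw [h]; simp]
            exact h'
          · right
            rw [show gen A B (m+1) = B by unfold gen; rw [show (m+1) % 2 = 0 by omega]; simp]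
            exact h'
      rcases hkey with h' | h'
      · exact hmin m hmN' h'
      · obtain ⟨m', rfl⟩ : ∃ m', m = m' + 1 := ⟨m - 1, by omega⟩
        apply hmin m' (by omega)
        have : gen A B m' (seq A B p (m' + 1)) = seq A B p (m' + 1) := by
          rw [← gen_congr (show (m' + 1 + 1) % 2 = m' % 2 by omega)]
          exact h'
        rw [← this, seq_back hA hB]
    · intro hb
      rcases hb with h | h
      · rw [h]; exact ⟨EqvGen.refl p, Or.inl hp⟩
      · rw [h]
        refine ⟨seq_mem_class N, ?_⟩
        have : gen A B N (seq A B p N) = seq A B p N := hstall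
        rcases Nat.mod_two_eq_zero_or_one N with h | h
        · right
          rw [show gen A B N = B by unfold gen; rw [h]; simp] at this
          exact this
        · left
          rw [show gen A B N = A by unfold gen; rw [h]; simp] at this
          exact this


section Concrete

variable {X : Type*} {r : X × X → X × X}

theorem l1 (hqb : IsQuantumBinomial r) {x y : X} (h : (r (x, y)).1 = x) : y = x :=
  (hqb.2.1 x).1 (show (r (x, y)).1 = (r (x, x)).1 by rw [h, hqb.2.2.2 x])

theorem l2 (hqb : IsQuantumBinomial r) {x y : X} (h : (r (x, y)).2 = y) : x = y :=
  (hqb.2.2.1 y).1 (show (r (x, y)).2 = (r (y, y)).2 by rw [h, hqb.2.2.2 y])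

theorem r12_invol (hqb : IsQuantumBinomial r) : Function.Involutive (r12 r) := by
  intro pt
  show r12 r (r12 r pt) = pt
  simp only [r12]
  rw [show ((r (pt.1, pt.2.1)).1, (r (pt.1, pt.2.1)).2) = r (pt.1, pt.2.1) from rfl,
    hqb.1 (pt.1, pt.2.1)]

theorem r23_invol (hqb : IsQuantumBinomial r) : Function.Involutive (r23 r) := by
  intro pt
  show r23 r (r23 r pt) = pt
  simp only [r23]
  rw [show ((r (pt.2.1, pt.2.2)).1, (r (pt.2.1, pt.2.2)).2) = r (pt.2.1, pt.2.2) from rfl,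
    hqb.1 (pt.2.1, pt.2.2)]

theorem fix_r12 (hqb : IsQuantumBinomial r) (pt : X × X × X) :
    r12 r pt = pt ↔ pt.1 = pt.2.1 := by
  constructor
  · intro h
    have h1 : (r (pt.1, pt.2.1)).1 = pt.1 := congrArg Prod.fst h
    exact (l1 hqb h1).symm
  · intro h
    show ((r (pt.1, pt.2.1)).1, (r (pt.1, pt.2.1)).2, pt.2.2) = pt
    rw [← h, hqb.2.2.2 pt.1]
    exact Prod.ext rfl (Prod.ext h rfl)

theorem fix_r23 (hqb : IsQuantumBinomial r) (pt : X × X × X) :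
    r23 r pt = pt ↔ pt.2.1 = pt.2.2 := by
  constructor
  · intro h
    have h1 : (r (pt.2.1, pt.2.2)).1 = pt.2.1 := congrArg Prod.fst (congrArg Prod.snd h)
    exact (l1 hqb h1).symm
  · intro h
    show (pt.1, (r (pt.2.1, pt.2.2)).1, (r (pt.2.1, pt.2.2)).2) = pt
    rw [← h, hqb.2.2.2 pt.2.1]
    exact Prod.ext rfl (Prod.ext rfl h)

theorem class_closed (hqb : IsQuantumBinomial r) {p b : X × X × X}
    (h : EqvGen (dStep r) p b) :
    EqvGen (dStep r) p (r12 r b) ∧ EqvGen (dStep r) p (r23 r b) :=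
  ⟨EqvGen.trans _ _ _ h (EqvGen.rel _ _ (Or.inl rfl)),
   EqvGen.trans _ _ _ h (EqvGen.rel _ _ (Or.inr rfl))⟩

theorem class_of_diag3 (hqb : IsQuantumBinomial r) {p : X × X × X} (hp : p ∈ Diag3)
    {b : X × X × X} (h : EqvGen (dStep r) p b) : b = p := by
  have hs : r12 r p = p := (fix_r12 hqb p).mpr hp.1
  have ht : r23 r p = p := (fix_r23 hqb p).mpr (hp.2)
  have hinv : ∀ x y, dStep r x y → ((x = p) ↔ (y = p)) := by
    rintro x y (rfl | rfl)
    · constructor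
      · rintro rfl; exact hs
      · intro hy
        have := congrArg (r12 r) hy
        rw [r12_invol hqb x, hs] at this
        exact this
    · constructor
      · rintro rfl; exact ht
      · intro hy
        have := congrArg (r23 r) hy
        rw [r23_invol hqb x, ht] at this
        exact this
  exact (eqvGen_iff_of_invariant hinv h).mp rfl

theorem orbit_eq {O : Set (X × X × X)} (hO : IsDOrbit r O) {p : X × X × X} (hp : p ∈ O) :
    O = {b | EqvGen (dStep r) p b} := by
  obtain ⟨a, rfl⟩ := hO
  have hap : EqvGen (dStep r) a p := hp
  ext b
  exact ⟨fun hb => EqvGen.trans _ _ _ (EqvGen.symm _ _ hap) hb,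
    fun hb => EqvGen.trans _ _ _ hap hb⟩

end Concrete

end DOrbitAux


open DOrbitAux

/-- Trichotomy for D-orbits of a finite quantum binomial set:
(i) an orbit meeting Δ₃ is a singleton;
(ii) an orbit meeting ((Δ₂ × X) ∪ (X × Δ₂)) \ Δ₃ has at least 3 elements and
meets that set in exactly 2 elements;
(iii) an orbit disjoint from (Δ₂ × X) ∪ (X × Δ₂) has at least 6 elements. -/
theorem dOrbit_trichotomy {X : Type*} [Fintype X]
    (r : X × X → X × X) (hqb : IsQuantumBinomial r)
    (O : Set (X × X × X)) (hO : IsDOrbit r O) :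
    ((O ∩ Diag3).Nonempty → O.ncard = 1) ∧
    ((O ∩ ((Diag2X ∪ XDiag2) \ Diag3)).Nonempty →
      3 ≤ O.ncard ∧ (O ∩ ((Diag2X ∪ XDiag2) \ Diag3)).ncard = 2) ∧
    (O ∩ (Diag2X ∪ XDiag2) = ∅ → 6 ≤ O.ncard) := by
  refine ⟨?_, ?_, ?_⟩
  · -- Part (i)
    rintro ⟨p, hpO, hpD⟩
    have hOp := orbit_eq hO hpO
    have hsing : O = {p} := by
      rw [hOp]
      ext b
      simp only [Set.mem_setOf_eq, Set.mem_singleton_iff]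
      exact ⟨fun h => class_of_diag3 hqb hpD h, fun h => by rw [h]; exact EqvGen.refl p⟩
    rw [hsing]
    exact Set.ncard_singleton p
  · -- Part (ii)
    rintro ⟨p, hpO, hpIn, hpD3⟩
    have hOp := orbit_eq hO hpO
    have hD3 : ∀ b ∈ O, b ∉ Diag3 := by
      intro b hb hbD
      have hOb := orbit_eq hO hb
      have hpb : p ∈ {c | EqvGen (dStep r) b c} := by rw [← hOb]; exact hpO
      exact hpD3 (class_of_diag3 hqb hbD hpb ▸ hbD)
    have hEeq : O ∩ ((Diag2X ∪ XDiag2) \ Diag3) =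
        {b | b ∈ O ∧ (r12 r b = b ∨ r23 r b = b)} := by
      ext b
      simp only [Set.mem_inter_iff, Set.mem_diff, Set.mem_union, Set.mem_setOf_eq]
      constructor
      · rintro ⟨hbO, hin, -⟩
        refine ⟨hbO, ?_⟩
        rcases hin with h | h
        · exact Or.inl ((fix_r12 hqb b).mpr h)
        · exact Or.inr ((fix_r23 hqb b).mpr h)
      · rintro ⟨hbO, hfx⟩
        refine ⟨hbO, ?_, hD3 b hbO⟩
        rcases hfx with h | h
        · exact Or.inl ((fix_r12 hqb b).mp h)
        · exact Or.inr ((fix_r23 hqb b).mp h)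
    rcases hpIn with hpd | hpd
    · -- p ∈ Diag2X : use A = r12 r, B = r23 r
      have hp : r12 r p = p := (fix_r12 hqb p).mpr hpd
      have h1 : r23 r p ≠ p := fun h => hpD3 ⟨hpd, (fix_r23 hqb p).mp h⟩
      have h2 : r12 r (r23 r p) ≠ r23 r p := by
        intro h
        have h' : (r23 r p).1 = (r23 r p).2.1 := (fix_r12 hqb _).mp h
        have h'' : (r (p.2.1, p.2.2)).1 = p.2.1 := by
          show (r23 r p).2.1 = p.2.1
          rw [← h']
          exact hpd.symm ▸ rfl
        exact hpD3 ⟨hpd, (l1 hqb h'').symm⟩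
      obtain ⟨h3le, q, hqp, hset⟩ := path_main (r12_invol hqb) (r23_invol hqb) hp h1 h2
      constructor
      · rw [hOp]; exact h3le
      · rw [hEeq, hOp]
        have : {b | b ∈ {b | EqvGen (dStep r) p b} ∧ (r12 r b = b ∨ r23 r b = b)} =
            ({p, q} : Set (X × X × X)) := hset
        rw [this]
        exact Set.ncard_pair (Ne.symm hqp)
    · -- p ∈ XDiag2 : use A = r23 r, B = r12 r
      have hp : r23 r p = p := (fix_r23 hqb p).mpr hpd
      have h1 : r12 r p ≠ p := fun h => hpD3 ⟨(fix_r12 hqb p).mp h, hpd⟩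
      have h2 : r23 r (r12 r p) ≠ r12 r p := by
        intro h
        have h' : (r12 r p).2.1 = (r12 r p).2.2 := (fix_r23 hqb _).mp h
        have h'' : (r (p.1, p.2.1)).2 = p.2.1 := by
          show (r12 r p).2.1 = p.2.1
          rw [h']
          exact hpd.symm ▸ rfl
        exact hpD3 ⟨l2 hqb h'', hpd⟩
      obtain ⟨h3le, q, hqp, hset⟩ := path_main (r23_invol hqb) (r12_invol hqb) hp h1 h2
      have hswap : {b | EqvGen (fun u v => r23 r u = v ∨ r12 r u = v) p b} =
          {b | EqvGen (dStep r) p b} := by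
        ext b
        exact ⟨fun h => Relation.EqvGen.mono (fun u v huv => Or.symm huv) _ _ h,
          fun h => Relation.EqvGen.mono (fun u v huv => Or.symm huv) _ _ h⟩
      constructor
      · rw [hOp, ← hswap]; exact h3le
      · rw [hEeq, hOp]
        have hfin : {b | b ∈ {b | EqvGen (dStep r) p b} ∧ (r12 r b = b ∨ r23 r b = b)} =
            ({p, q} : Set (X × X × X)) := by
          rw [← hset]
          ext b
          simp only [Set.mem_setOf_eq]
          constructor
          · rintro ⟨hb, hf⟩
            exact ⟨(Set.ext_iff.mp hswap b).mpr hb, Or.symm hf⟩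
          · rintro ⟨hb, hf⟩
            exact ⟨(Set.ext_iff.mp hswap b).mp hb, Or.symm hf⟩
        rw [hfin]
        exact Set.ncard_pair (Ne.symm hqp)
  · -- Part (iii)
    intro hdis
    obtain ⟨a, ha⟩ := hO
    have haO : a ∈ O := by rw [ha]; exact EqvGen.refl a
    have hcl : ∀ b ∈ O, r12 r b ∈ O ∧ r23 r b ∈ O := by
      intro b hb
      rw [ha] at hb ⊢
      exact class_closed hqb hb
    have hnotin : ∀ b ∈ O, b.1 ≠ b.2.1 ∧ b.2.1 ≠ b.2.2 := by
      intro b hb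
      constructor
      · intro h
        exact absurd (Set.eq_empty_iff_forall_notMem.mp hdis b ⟨hb, Or.inl h⟩) (fun h => h)
      · intro h
        exact absurd (Set.eq_empty_iff_forall_notMem.mp hdis b ⟨hb, Or.inr h⟩) (fun h => h)
    have hfixs : ∀ b ∈ O, r12 r b ≠ b := fun b hb h =>
      (hnotin b hb).1 ((fix_r12 hqb b).mp h)
    have hfixt : ∀ b ∈ O, r23 r b ≠ b := fun b hb h =>
      (hnotin b hb).2 ((fix_r23 hqb b).mp h)
    have key1 : ∀ b ∈ O, r12 r b ≠ r23 r b := by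
      intro b hb h
      have h1 : (r (b.1, b.2.1)).1 = b.1 := congrArg Prod.fst h
      exact (hnotin b hb).1 (l1 hqb h1).symm
    have key2 : ∀ b ∈ O, r23 r (r12 r b) ≠ r12 r (r23 r b) := by
      intro b hb h
      have h1 : (r ((r (b.1, b.2.1)).2, b.2.2)).2 = (r (b.2.1, b.2.2)).2 := by
        have := congrArg (fun z => z.2.2) h
        simpa [r12, r23] using this
      have h2 : (r (b.1, b.2.1)).2 = b.2.1 := (hqb.2.2.1 b.2.2).1 h1
      exact (hnotin b hb).1 (l2 hqb h2)
    -- the six elements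
    set s : X × X × X → X × X × X := r12 r with hs
    set t : X × X × X → X × X × X := r23 r with ht
    have hsi : ∀ z, s (s z) = z := r12_invol hqb
    have hti : ∀ z, t (t z) = z := r23_invol hqb
    have h1O : s a ∈ O := (hcl a haO).1
    have h2O : t a ∈ O := (hcl a haO).2
    have h3O : t (s a) ∈ O := (hcl _ h1O).2
    have h4O : s (t a) ∈ O := (hcl _ h2O).1
    have h5O : s (t (s a)) ∈ O := (hcl _ h3O).1
    have k1 : s a ≠ t a := key1 a haO
    have k2 : t (s a) ≠ s (t a) := key2 a haO
    have d01 : a ≠ s a := fun h => hfixs a haO h.symm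
    have d02 : a ≠ t a := fun h => hfixt a haO h.symm
    have d03 : a ≠ t (s a) := by
      intro h
      have := congrArg t h
      rw [hti] at this
      exact k1 this.symm
    have d04 : a ≠ s (t a) := by
      intro h
      have := congrArg s h
      rw [hsi] at this
      exact k1 this
    have d05 : a ≠ s (t (s a)) := by
      intro h
      have := congrArg s h
      rw [hsi] at this
      exact hfixt (s a) h1O this.symm
    have d12 : s a ≠ t a := k1
    have d13 : s a ≠ t (s a) := fun h => hfixt (s a) h1O h.symm
    have d14 : s a ≠ s (t a) := by
      intro h
      have := congrArg s h
      rw [hsi, hsi] at this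
      exact d02 this
    have d15 : s a ≠ s (t (s a)) := by
      intro h
      have := congrArg s h
      rw [hsi, hsi] at this
      exact d03 this
    have d23 : t a ≠ t (s a) := by
      intro h
      have := congrArg t h
      rw [hti, hti] at this
      exact d01 this
    have d24 : t a ≠ s (t a) := fun h => hfixs (t a) h2O h.symm
    have d25 : t a ≠ s (t (s a)) := by
      intro h
      have := congrArg s h
      rw [hsi] at this
      exact k2 this.symm
    have d34 : t (s a) ≠ s (t a) := k2
    have d35 : t (s a) ≠ s (t (s a)) := fun h => hfixs _ h3O h.symm
    have d45 : s (t a) ≠ s (t (s a)) := by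
      intro h
      have := congrArg s h
      rw [hsi, hsi] at this
      exact d23 this
    have hsub : ({a, s a, t a, t (s a), s (t a), s (t (s a))} : Set (X × X × X)) ⊆ O := by
      intro x hx
      simp only [Set.mem_insert_iff, Set.mem_singleton_iff] at hx
      rcases hx with h | h | h | h | h | h <;> rw [h] <;> assumption
    have hcard : ({a, s a, t a, t (s a), s (t a), s (t (s a))} : Set (X × X × X)).ncard = 6 := by
      rw [Set.ncard_insert_of_notMem (by
        simp only [Set.mem_insert_iff, Set.mem_singleton_iff]; push_neg
        exact ⟨d01, d02, d03, d04, d05⟩)]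
      rw [Set.ncard_insert_of_notMem (by
        simp only [Set.mem_insert_iff, Set.mem_singleton_iff]; push_neg
        exact ⟨d12, d13, d14, d15⟩)]
      rw [Set.ncard_insert_of_notMem (by
        simp only [Set.mem_insert_iff, Set.mem_singleton_iff]; push_neg
        exact ⟨d23, d24, d25⟩)]
      rw [Set.ncard_insert_of_notMem (by
        simp only [Set.mem_insert_iff, Set.mem_singleton_iff]; push_neg
        exact ⟨d34, d35⟩)]
      rw [Set.ncard_insert_of_notMem (by
        simp only [Set.mem_singleton_iff]
        exact d45)]
      rw [Set.ncard_singleton]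
    calc 6 = ({a, s a, t a, t (s a), s (t a), s (t (s a))} : Set (X × X × X)).ncard := hcard.symm
    _ ≤ O.ncard := Set.ncard_le_ncard hsub (Set.toFinite O)
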